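/- arXiv:2502.17274 — 2 statements merged into one kernel-verified Lean document; each statement's English description precedes it below -/
import Mathlib

section
/- Let ζ, t ∈ ℂ satisfy |t|·e^{|ζt|} < 1. Then the series Σ_{n=0}^{∞} f̃_n(ζ)·t^n, where f̃_n(ζ) := Σ_{j=0}^{n} ((j+1)ζ)^{n−j}/(n−j)!, converges absolutely, its sum equals 1/(e^{−ζt} − t), and the denominator e^{−ζt} − t is nonzero. That is, 1/(e^{−ζt} − t) is the generating function of the polynomial sequence (f̃_n)_{n≥0}. -/
open Finset

theorem aux_summable_antidiag {M : Type*} [AddCommGroup M] [UniformSpace M]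
    [IsUniformAddGroup M] [T3Space M] [CompleteSpace M]
    {F : ℕ × ℕ → M} (h : Summable F) :
    Summable fun n => ∑ p ∈ antidiagonal n, F p := by
  have h' : Summable fun x : Σ n : ℕ, antidiagonal n => F x.2 :=
    Finset.HasAntidiagonal.sigmaAntidiagonalEquivProd.summable_iff.mpr h
  conv => congr; ext; rw [← Finset.sum_finset_coe, ← tsum_fintype (L := SummationFilter.unconditional _)]
  exact h'.sigma' fun n => (hasSum_fintype _).summable

theorem aux_tsum_antidiag {M : Type*} [AddCommGroup M] [UniformSpace M]
    [IsUniformAddGroup M] [T3Space M] [CompleteSpace M]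
    {F : ℕ × ℕ → M} (h : Summable F) :
    ∑' n : ℕ, ∑ p ∈ antidiagonal n, F p = ∑' p : ℕ × ℕ, F p := by
  have h' : Summable fun x : Σ n : ℕ, antidiagonal n => F x.2 :=
    Finset.HasAntidiagonal.sigmaAntidiagonalEquivProd.summable_iff.mpr h
  calc ∑' n : ℕ, ∑ p ∈ antidiagonal n, F p
      = ∑' (n : ℕ), ∑' (c : antidiagonal n), F (c : ℕ × ℕ) :=
        tsum_congr fun n => by rw [tsum_fintype]; exact (Finset.sum_finset_coe _ _).symm
    _ = ∑' (x : Σ n : ℕ, antidiagonal n), F x.2 :=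
        (Summable.tsum_sigma' (fun n => (hasSum_fintype _).summable) h').symm
    _ = ∑' p : ℕ × ℕ, F p := Finset.HasAntidiagonal.sigmaAntidiagonalEquivProd.tsum_eq F


/-- `f̃_n(ζ) := Σ_{j=0}^{n} ((j+1)ζ)^{n−j}/(n−j)!`. -/
noncomputable def ftPoly (n : ℕ) (ζ : ℂ) : ℂ :=
  ∑ j ∈ range (n + 1),
    (((j + 1 : ℕ) : ℂ) * ζ) ^ (n - j) / ((Nat.factorial (n - j) : ℂ))

/-- If `|t|·e^{|ζt|} < 1` then `Σ_{n=0}^{∞} f̃_n(ζ)·t^n` converges absolutely, the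
denominator `e^{−ζt} − t` is nonzero, and the sum equals `1/(e^{−ζt} − t)`:
`1/(e^{−ζt} − t)` is the generating function of `(f̃_n)_{n≥0}`. -/
theorem ftPoly_generating_function (ζ t : ℂ)
    (h : ‖t‖ * Real.exp ‖ζ * t‖ < 1) :
    Complex.exp (-ζ * t) - t ≠ 0 ∧
    Summable (fun n : ℕ => ‖ftPoly n ζ * t ^ n‖) ∧
    ∑' n : ℕ, ftPoly n ζ * t ^ n = 1 / (Complex.exp (-ζ * t) - t) := by
  set a := ‖ζ * t‖ with ha
  set r := ‖t‖ with hr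
  set F : ℕ × ℕ → ℂ := fun p =>
    t ^ p.1 * (((p.1 + 1 : ℕ) : ℂ) * (ζ * t)) ^ p.2 / (Nat.factorial p.2 : ℂ) with hF
  -- norm of F
  have hnorm : ∀ p : ℕ × ℕ,
      ‖F p‖ = r ^ p.1 * ((p.1 + 1 : ℕ) * a) ^ p.2 / (Nat.factorial p.2) := by
    intro p
    simp only [hF, norm_div, norm_mul, norm_pow, Complex.norm_natCast]
    rw [ha, hr, norm_mul]
  -- summability of the norms
  have hsum_norm : Summable fun p : ℕ × ℕ => ‖F p‖ := by
    rw [show (fun p : ℕ × ℕ => ‖F p‖)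
        = fun p : ℕ × ℕ => r ^ p.1 * ((p.1 + 1 : ℕ) * a) ^ p.2 / (Nat.factorial p.2)
        from funext hnorm]
    apply (summable_prod_of_nonneg ?_).2
    constructor
    · intro j
      simp only [mul_div_assoc]
      exact (Real.summable_pow_div_factorial _).mul_left _
    · have hinner : ∀ j : ℕ,
          ∑' k : ℕ, r ^ j * ((j + 1 : ℕ) * a) ^ k / (Nat.factorial k)
            = Real.exp a * (r * Real.exp a) ^ j := by
        intro j
        simp only [mul_div_assoc]
        rw [tsum_mul_left]
        have : ∑' k : ℕ, ((j + 1 : ℕ) * a) ^ k / (Nat.factorial k)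
            = Real.exp ((j + 1 : ℕ) * a) := by
          rw [Real.exp_eq_exp_ℝ, NormedSpace.exp_eq_tsum_div]
        rw [this]
        push_cast
        rw [add_mul, one_mul, Real.exp_add, Real.exp_nat_mul]
        ring
      rw [show (fun j : ℕ => ∑' k : ℕ, r ^ j * ((j + 1 : ℕ) * a) ^ k / (Nat.factorial k))
          = fun j => Real.exp a * (r * Real.exp a) ^ j from funext hinner]
      exact (summable_geometric_of_lt_one (by positivity) h).mul_left _
    · intro p
      positivity
  have hsumF : Summable F := hsum_norm.of_norm
  -- diagonal identity
  have hdiag : ∀ n : ℕ, ftPoly n ζ * t ^ n = ∑ p ∈ antidiagonal n, F p := by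
    intro n
    rw [Finset.Nat.sum_antidiagonal_eq_sum_range_succ_mk, ftPoly, Finset.sum_mul]
    refine Finset.sum_congr rfl fun j hj => ?_
    have hj' : j ≤ n := Nat.lt_succ_iff.mp (Finset.mem_range.mp hj)
    have ht : t ^ n = t ^ j * t ^ (n - j) := by
      rw [← pow_add, Nat.add_sub_cancel' hj']
    simp only [hF]
    rw [ht, mul_pow]
    ring
  -- key norm bound
  have hkey : ‖t * Complex.exp (ζ * t)‖ < 1 := by
    have h1 : ‖t * Complex.exp (ζ * t)‖ = r * Real.exp ((ζ * t).re) := by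
      rw [norm_mul, Complex.norm_exp, hr]
    have h2 : Real.exp ((ζ * t).re) ≤ Real.exp a :=
      Real.exp_le_exp.mpr (Complex.re_le_norm _)
    calc ‖t * Complex.exp (ζ * t)‖ ≤ r * Real.exp a := by
          rw [h1]; exact mul_le_mul_of_nonneg_left h2 (norm_nonneg t)
      _ < 1 := h
  have hne1 : (1 : ℂ) - t * Complex.exp (ζ * t) ≠ 0 := by
    rw [sub_ne_zero]
    intro hc
    rw [← hc] at hkey
    simp at hkey
  -- factor the denominator
  have h1 : Complex.exp (-(ζ * t)) * Complex.exp (ζ * t) = 1 := by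
    rw [← Complex.exp_add]; simp
  have hfac : Complex.exp (-ζ * t) - t
      = Complex.exp (-(ζ * t)) * (1 - t * Complex.exp (ζ * t)) := by
    rw [neg_mul, mul_sub, mul_one]
    congr 1
    rw [← mul_assoc, mul_comm (Complex.exp (-(ζ * t))) t, mul_assoc, h1, mul_one]
  have hne : Complex.exp (-ζ * t) - t ≠ 0 := by
    rw [hfac]
    exact mul_ne_zero (Complex.exp_ne_zero _) hne1
  -- summability of absolute values
  have hsum_abs : Summable (fun n : ℕ => ‖ftPoly n ζ * t ^ n‖) := by
    have hS : Summable fun n : ℕ => ∑ p ∈ antidiagonal n, ‖F p‖ :=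
      aux_summable_antidiag hsum_norm
    refine hS.of_nonneg_of_le (fun n => norm_nonneg _) (fun n => ?_)
    rw [hdiag n]
    exact norm_sum_le _ _
  refine ⟨hne, hsum_abs, ?_⟩
  -- compute the sum
  have hinnerC : ∀ j : ℕ, (∑' k : ℕ, F (j, k))
      = Complex.exp (ζ * t) * (t * Complex.exp (ζ * t)) ^ j := by
    intro j
    simp only [hF, mul_div_assoc]
    rw [tsum_mul_left]
    have he : ∑' k : ℕ, (((j + 1 : ℕ) : ℂ) * (ζ * t)) ^ k / ((Nat.factorial k : ℂ))
        = Complex.exp (((j + 1 : ℕ) : ℂ) * (ζ * t)) := by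
      rw [Complex.exp_eq_exp_ℂ, NormedSpace.exp_eq_tsum_div]
    rw [he]
    push_cast
    rw [add_mul, one_mul, Complex.exp_add, Complex.exp_nat_mul, mul_pow]
    ring
  calc ∑' n : ℕ, ftPoly n ζ * t ^ n
      = ∑' n : ℕ, ∑ p ∈ antidiagonal n, F p := tsum_congr hdiag
    _ = ∑' p : ℕ × ℕ, F p := aux_tsum_antidiag hsumF
    _ = ∑' (j : ℕ) (k : ℕ), F (j, k) := Summable.tsum_prod hsumF
    _ = ∑' j : ℕ, Complex.exp (ζ * t) * (t * Complex.exp (ζ * t)) ^ j :=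
        tsum_congr hinnerC
    _ = Complex.exp (ζ * t) * (1 - t * Complex.exp (ζ * t))⁻¹ := by
        rw [tsum_mul_left, tsum_geometric_of_norm_lt_one hkey]
    _ = 1 / (Complex.exp (-ζ * t) - t) := by
        rw [hfac, one_div, mul_inv, Complex.exp_neg, inv_inv]
end

section
/- Let q ≥ 1 and s > q be integers, α > 0 and R > 0 real, t₀ ∈ ℝ, and let f : ℂ → ℂ be holomorphic on an open set containing the closed disk of radius R centered at t₀. Let ω_k := exp(2πik/s) and, for r > 0, define f̂_m(r) := (1/s)·Σ_{k=1}^{s} ω_k^{−m}·f(t₀ + r·ω_k) and Q(r) := r·Σ_{ν=1}^{q} ( (1/s)·Σ_{j=1}^{s} (α+ω_j)^{ν}/ν )·f̂_{ν−1}(r). Then there exists a constant C > 0 such that for all r with 0 < r ≤ R/(1+α): | Q(r) − ∫_{0}^{αr} f(t₀ + t) dt | ≤ C·r^{q+1}. That is, with time step τ = αr, the quadrature (r/s)·𝟙ᵀB(α)f^{[n]} of the Adams–Bashforth-type integrator approximates ∫_{t_n}^{t_n+τ} f(t) dt with error O(τ^{q+1}) when s > q. -/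
open Finset

/-- The `s`-th roots of unity: `ω k = exp(2πik/s)`. -/
noncomputable def omegaU (s k : ℕ) : ℂ :=
  Complex.exp (2 * Real.pi * Complex.I * k / s)

/-- The trapezoidal Fourier coefficient
`f̂_m(r) := (1/s)·Σ_{k=1}^{s} ω_k^{−m}·f(t₀ + rω_k)`. -/
noncomputable def fhat (s : ℕ) (f : ℂ → ℂ) (t₀ : ℝ) (m : ℕ) (r : ℝ) : ℂ :=
  (1 / (s : ℂ)) * ∑ k ∈ Icc 1 s, (omegaU s k) ^ (-(m : ℤ)) * f ((t₀ : ℂ) + (r : ℂ) * omegaU s k)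

/-- The ABTI quadrature
`Q(r) := r·Σ_{ν=1}^{q} ((1/s)·Σ_{j=1}^{s} (α+ω_j)^ν/ν)·f̂_{ν−1}(r)`. -/
noncomputable def Qquad (q s : ℕ) (α : ℝ) (f : ℂ → ℂ) (t₀ : ℝ) (r : ℝ) : ℂ :=
  (r : ℂ) * ∑ ν ∈ Icc 1 q,
    ((1 / (s : ℂ)) * ∑ j ∈ Icc 1 s, ((α : ℂ) + omegaU s j) ^ ν / (ν : ℂ))
      * fhat s f t₀ (ν - 1) r

lemma omegaU_ne_zero (s k : ℕ) : omegaU s k ≠ 0 := Complex.exp_ne_zero _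

lemma omegaU_abs (s k : ℕ) : ‖omegaU s k‖ = 1 := by
  rw [omegaU, show (2 * (Real.pi:ℂ) * Complex.I * k / s) = ((2 * Real.pi * k / s : ℝ) : ℂ) * Complex.I by push_cast; ring]
  exact Complex.norm_exp_ofReal_mul_I _

lemma omegaU_zpow (s : ℕ) (k : ℕ) (j : ℤ) :
    (omegaU s k) ^ j = Complex.exp (2 * Real.pi * Complex.I * j / s) ^ k := by
  rw [omegaU, ← Complex.exp_int_mul, ← Complex.exp_nat_mul]
  ring_nf

lemma sum_omegaU_zpow (s : ℕ) (hs : 0 < s) (j : ℤ) :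
    ∑ k ∈ Icc 1 s, (omegaU s k) ^ j = if (s : ℤ) ∣ j then (s : ℂ) else 0 := by
  have hsz : (s : ℂ) ≠ 0 := Nat.cast_ne_zero.mpr hs.ne'
  set ζ : ℂ := Complex.exp (2 * Real.pi * Complex.I * j / s) with hζ
  have hsum : ∑ k ∈ Icc 1 s, (omegaU s k) ^ j = ∑ k ∈ Icc 1 s, ζ ^ k :=
    Finset.sum_congr rfl fun k _ => omegaU_zpow s k j
  rw [hsum]
  by_cases hdvd : (s : ℤ) ∣ j
  · obtain ⟨m, hm⟩ := hdvd
    have hz1 : ζ = 1 := by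
      rw [hζ, hm]
      push_cast
      rw [show 2 * (Real.pi:ℂ) * Complex.I * ((s:ℂ) * (m:ℂ)) / (s:ℂ)
            = (m:ℂ) * (2 * (Real.pi:ℂ) * Complex.I) by field_simp]
      exact Complex.exp_int_mul_two_pi_mul_I m
    rw [if_pos ⟨m, hm⟩, hz1]
    simp
  · have hζ1 : ζ ≠ 1 := by
      intro h
      rw [hζ, Complex.exp_eq_one_iff] at h
      obtain ⟨n, hn⟩ := h
      have h2 : (2 * (Real.pi:ℂ) * Complex.I) ≠ 0 := by
        simp [Real.pi_ne_zero, Complex.I_ne_zero, Complex.ofReal_ne_zero]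
      have hj : (j : ℂ) = (n : ℂ) * (s : ℂ) := by
        field_simp at hn
        have h' : (2 * (Real.pi:ℂ) * Complex.I) * (j:ℂ)
            = (2 * (Real.pi:ℂ) * Complex.I) * ((n:ℂ) * (s:ℂ)) := by rw [hn]; ring
        exact mul_left_cancel₀ h2 h'
      have : j = n * s := by exact_mod_cast hj
      exact hdvd ⟨n, by linarith [this]⟩
    have hζs : ζ ^ s = 1 := by
      rw [hζ, ← Complex.exp_nat_mul,
        show (s:ℂ) * (2 * (Real.pi:ℂ) * Complex.I * (j:ℂ) / (s:ℂ))
          = (j:ℂ) * (2 * (Real.pi:ℂ) * Complex.I) by field_simp]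
      exact Complex.exp_int_mul_two_pi_mul_I j
    have hrw : ∑ k ∈ Icc 1 s, ζ ^ k = ζ * ∑ k ∈ range s, ζ ^ k := by
      rw [Finset.mul_sum,
        show Icc 1 s = Finset.map ⟨Nat.succ, Nat.succ_injective⟩ (range s) by
          ext x
          simp only [Finset.mem_map, Finset.mem_range, Finset.mem_Icc,
            Function.Embedding.coeFn_mk, Nat.succ_eq_add_one]
          constructor
          · rintro ⟨h1, h2⟩; exact ⟨x - 1, by omega, by omega⟩
          · rintro ⟨a, ha, rfl⟩; omega,
        Finset.sum_map]
      exact Finset.sum_congr rfl fun k _ => by simp [pow_succ]; ring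
    rw [hrw, geom_sum_eq hζ1, hζs]
    simp [hdvd]

lemma sum_binom (s ν : ℕ) (hν : ν < s) (α : ℝ) (hs : 0 < s) :
    ∑ j ∈ Icc 1 s, ((α : ℂ) + omegaU s j) ^ ν = (s : ℂ) * (α : ℂ) ^ ν := by
  have expand : ∀ j, ((α : ℂ) + omegaU s j) ^ ν
      = ∑ k ∈ range (ν + 1), omegaU s j ^ k * (α:ℂ) ^ (ν - k) * (ν.choose k) := by
    intro j
    rw [add_comm, add_pow]
  simp_rw [expand]
  rw [Finset.sum_comm]
  have key : ∀ k ∈ range (ν + 1),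
      ∑ j ∈ Icc 1 s, omegaU s j ^ k * (α:ℂ) ^ (ν - k) * (ν.choose k)
      = if k = 0 then (s : ℂ) * (α:ℂ)^ν else 0 := by
    intro k hk
    rw [← Finset.sum_mul, ← Finset.sum_mul]
    have hzp : ∑ j ∈ Icc 1 s, omegaU s j ^ k = ∑ j ∈ Icc 1 s, omegaU s j ^ (k : ℤ) := by
      simp [zpow_natCast]
    rw [hzp, sum_omegaU_zpow s hs k]
    rcases Nat.eq_zero_or_pos k with rfl | hk0
    · simp
    · have hnd : ¬ (s:ℤ) ∣ (k:ℤ) := by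
        rw [Int.natCast_dvd_natCast]
        intro h
        have := Nat.le_of_dvd hk0 h
        simp at hk
        omega
      rw [if_neg hnd, if_neg hk0.ne']
      ring
  rw [Finset.sum_congr rfl key]
  simp

/-- When `s > q`, the ABTI quadrature approximates `∫_0^{αr} f(t₀+t) dt` with error
`O(r^{q+1})`, i.e. `O(τ^{q+1})` with `τ = αr`. -/
theorem abti_quadrature_error_s_gt_q (q s : ℕ) (hq : 1 ≤ q) (hs : q < s)
    (α R : ℝ) (hα : 0 < α) (hR : 0 < R) (t₀ : ℝ) (f : ℂ → ℂ)
    (U : Set ℂ) (hU : IsOpen U) (hball : Metric.closedBall (t₀ : ℂ) R ⊆ U)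
    (hf : DifferentiableOn ℂ f U) :
    ∃ C : ℝ, 0 < C ∧ ∀ r : ℝ, 0 < r → r ≤ R / (1 + α) →
      ‖Qquad q s α f t₀ r - ∫ t in (0 : ℝ)..(α * r), f ((t₀ : ℂ) + (t : ℂ))‖
        ≤ C * r ^ (q + 1) := by
  have hs0 : 0 < s := lt_of_le_of_lt (Nat.zero_le q) hs
  have hsC : (s : ℂ) ≠ 0 := Nat.cast_ne_zero.mpr hs0.ne'
  -- power series of f at t₀
  set Rn : NNReal := ⟨R, hR.le⟩ with hRnDef
  have hRcoe : (Rn : ℝ) = R := rfl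
  have hdisk : DifferentiableOn ℂ f (Metric.closedBall (t₀:ℂ) Rn) := hf.mono (by rw [hRcoe]; exact hball)
  have hRn0 : 0 < Rn := by rw [← NNReal.coe_lt_coe]; exact hR
  have hp : HasFPowerSeriesOnBall f (cauchyPowerSeries f (t₀:ℂ) Rn) (t₀:ℂ) Rn :=
    hdisk.hasFPowerSeriesOnBall hRn0
  set p := cauchyPowerSeries f (t₀:ℂ) (Rn:ℝ) with hpdef
  set a : ℕ → ℂ := fun n => p.coeff n with hadef
  -- pointwise power series expansion
  have hsum : ∀ z : ℂ, ‖z‖ < R → HasSum (fun n => a n * z ^ n) (f ((t₀:ℂ) + z)) := by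
    intro z hz
    have hz' : z ∈ Metric.eball (0:ℂ) Rn := by
      rw [Metric.mem_eball, edist_zero_right]
      have : ‖z‖₊ < Rn := by rw [← NNReal.coe_lt_coe]; exact hz
      exact_mod_cast this
    have h0 := hp.hasSum hz'
    simp_rw [FormalMultilinearSeries.apply_eq_pow_smul_coeff, smul_eq_mul] at h0
    simpa [mul_comm] using h0
  -- geometric setup
  set A : ℝ := max 1 α with hAdef
  have hA1 : 1 ≤ A := le_max_left _ _
  have hAα : α ≤ A := le_max_right _ _
  have hA0 : 0 < A := lt_of_lt_of_le one_pos hA1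
  set B : ℝ := R / (1 + α) with hBdef
  have hB0 : 0 < B := div_pos hR (by linarith)
  set x : ℝ := A * B with hxdef
  have hx0 : 0 < x := mul_pos hA0 hB0
  have hA1α : A < 1 + α := max_lt (by linarith) (by linarith)
  have hxR : x < R := by
    have h1 : A * B < (1 + α) * B := mul_lt_mul_of_pos_right hA1α hB0
    have h2 : (1 + α) * B = R := by rw [hBdef]; field_simp
    rw [hxdef]; linarith
  -- summability of coefficients against x^n
  have hxlt : (x.toNNReal : ENNReal) < p.radius := by
    refine lt_of_lt_of_le ?_ hp.r_le
    rw [ENNReal.coe_lt_coe, ← NNReal.coe_lt_coe, Real.coe_toNNReal _ hx0.le]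
    exact hxR
  have Sx : Summable (fun n => ‖a n‖ * x ^ n) := by
    have h1 : Summable (fun n => ‖p n‖ * (x.toNNReal : ℝ) ^ n) := p.summable_norm_mul_pow hxlt
    rw [Real.coe_toNNReal _ hx0.le] at h1
    refine h1.congr fun n => ?_
    rw [hadef, ← FormalMultilinearSeries.norm_apply_eq_norm_coef]
  set C₀ : ℝ := ∑' n, ‖a n‖ * x ^ n with hC0def
  have hC0nn : 0 ≤ C₀ := tsum_nonneg fun n => mul_nonneg (norm_nonneg _) (pow_nonneg hx0.le n)
  set K : ℝ := (q * A ^ q + A) / B ^ q with hKdef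
  have hK0 : 0 < K := by
    apply div_pos
    · have : (0:ℝ) < A ^ q := pow_pos hA0 q
      positivity
    · exact pow_pos hB0 q
  refine ⟨K * C₀ + 1, by positivity, ?_⟩
  intro r hr0 hrB
  have hBx : B ≤ x := by rw [hxdef]; exact le_mul_of_one_le_left hB0.le hA1
  have hrR : r < R := lt_of_le_of_lt (le_trans hrB hBx) hxR
  -- fhat as a sum
  have hfhat : ∀ m : ℕ, HasSum
      (fun n : ℕ => if (s:ℤ) ∣ ((n:ℤ) - (m:ℤ)) then a n * (r:ℂ)^n else 0)
      (fhat s f t₀ m r) := by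
    intro m
    have hterm : ∀ k ∈ Icc 1 s, HasSum
        (fun n => (1/(s:ℂ)) * ((omegaU s k)^(-(m:ℤ)) * (a n * ((r:ℂ) * omegaU s k)^n)))
        ((1/(s:ℂ)) * ((omegaU s k)^(-(m:ℤ)) * f ((t₀:ℂ) + r * omegaU s k))) := by
      intro k _
      have hnorm : ‖(r:ℂ) * omegaU s k‖ < R := by
        rw [norm_mul]
        have h1 : ‖(r:ℂ)‖ = r := by rw [Complex.norm_real, Real.norm_of_nonneg hr0.le]
        have h2 : ‖omegaU s k‖ = 1 := omegaU_abs s k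
        rw [h1, h2, mul_one]; exact hrR
      exact ((hsum _ hnorm).mul_left _).mul_left _
    have h2 := hasSum_sum hterm
    have hfun : (fun n : ℕ => ∑ k ∈ Icc 1 s,
          (1/(s:ℂ)) * ((omegaU s k)^(-(m:ℤ)) * (a n * ((r:ℂ) * omegaU s k)^n)))
        = (fun n : ℕ => if (s:ℤ) ∣ ((n:ℤ) - (m:ℤ)) then a n * (r:ℂ)^n else 0) := by
      funext n
      have step : ∀ k, (1/(s:ℂ)) * ((omegaU s k)^(-(m:ℤ)) * (a n * ((r:ℂ) * omegaU s k)^n))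
          = (a n * (r:ℂ)^n / s) * (omegaU s k)^((n:ℤ) - m) := by
        intro k
        rw [mul_pow,
          show ((n:ℤ) - m) = -(m:ℤ) + n by ring,
          zpow_add₀ (omegaU_ne_zero s k), zpow_natCast]
        field_simp
      simp_rw [step]
      rw [← Finset.mul_sum, sum_omegaU_zpow s hs0 ((n:ℤ) - m)]
      by_cases hd : (s:ℤ) ∣ ((n:ℤ) - m)
      · rw [if_pos hd, if_pos hd]; field_simp
      · rw [if_neg hd, if_neg hd, mul_zero]
    rw [hfun] at h2
    have hval : fhat s f t₀ m r = ∑ k ∈ Icc 1 s,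
        (1/(s:ℂ)) * ((omegaU s k)^(-(m:ℤ)) * f ((t₀:ℂ) + r * omegaU s k)) := by
      rw [fhat, Finset.mul_sum]
    rw [hval]
    exact h2
  -- the Q side
  have hQcoeff : ∀ ν ∈ Icc 1 q,
      (1/(s:ℂ)) * ∑ j ∈ Icc 1 s, ((α:ℂ)+omegaU s j)^ν / (ν:ℂ) = (α:ℂ)^ν/(ν:ℂ) := by
    intro ν hν
    simp only [mem_Icc] at hν
    rw [← Finset.sum_div, sum_binom s ν (lt_of_le_of_lt hν.2 hs) α hs0]
    have hν0 : (ν:ℂ) ≠ 0 := Nat.cast_ne_zero.mpr (by omega)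
    field_simp
  have hQ : HasSum (fun n : ℕ => (r:ℂ) * ∑ ν ∈ Icc 1 q, ((α:ℂ)^ν/(ν:ℂ)) *
      (if (s:ℤ) ∣ ((n:ℤ) - ((ν-1 : ℕ):ℤ)) then a n * (r:ℂ)^n else 0))
      (Qquad q s α f t₀ r) := by
    have h1 : ∀ ν ∈ Icc 1 q, HasSum
        (fun n : ℕ => ((α:ℂ)^ν/(ν:ℂ)) * (if (s:ℤ) ∣ ((n:ℤ) - ((ν-1:ℕ):ℤ)) then a n * (r:ℂ)^n else 0))
        (((α:ℂ)^ν/(ν:ℂ)) * fhat s f t₀ (ν-1) r) :=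
      fun ν _ => (hfhat (ν-1)).mul_left _
    have h2 := (hasSum_sum h1).mul_left (r:ℂ)
    have hval : Qquad q s α f t₀ r
        = (r:ℂ) * ∑ ν ∈ Icc 1 q, ((α:ℂ)^ν/(ν:ℂ)) * fhat s f t₀ (ν-1) r := by
      rw [Qquad]
      congr 1
      exact Finset.sum_congr rfl fun ν hν => by rw [hQcoeff ν hν]
    rw [hval]
    exact h2
  -- the integral side
  set T : ℝ := α * r with hTdef
  have hT0 : 0 ≤ T := by positivity
  have hTx : T ≤ x := by
    rw [hTdef, hxdef]
    exact mul_le_mul hAα hrB hr0.le hA0.le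
  have hTR : T < R := lt_of_le_of_lt hTx hxR
  have hint_f : ∀ n : ℕ, MeasureTheory.IntegrableOn
      (fun t : ℝ => a n * (t:ℂ)^n) (Set.Ioc 0 T) :=
    fun n => Continuous.integrableOn_Ioc (continuous_const.mul (Complex.continuous_ofReal.pow n))
  have hint_val : ∀ n : ℕ, ∫ t in (0:ℝ)..T, a n * (t:ℂ)^n
      = a n * ((T:ℝ):ℂ)^(n+1) / ((n:ℂ)+1) := by
    intro n
    rw [intervalIntegral.integral_const_mul]
    have hre : ∫ t in (0:ℝ)..T, ((t:ℝ):ℂ)^n = (((∫ t in (0:ℝ)..T, t^n : ℝ)) : ℂ) := by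
      rw [← intervalIntegral.integral_ofReal]
      congr 1
      funext t
      push_cast
      ring
    rw [hre, integral_pow]
    push_cast
    ring
  have hnorm_val : ∀ n : ℕ, ∫ t in Set.Ioc (0:ℝ) T, ‖a n * ((t:ℝ):ℂ)^n‖
      = ‖a n‖ * ((T^(n+1) - 0^(n+1)) / (n+1)) := by
    intro n
    have heq : Set.EqOn (fun t : ℝ => ‖a n * ((t:ℝ):ℂ)^n‖)
        (fun t : ℝ => ‖a n‖ * t^n) (Set.Ioc 0 T) := by
      intro t ht
      simp only
      rw [norm_mul, norm_pow, Complex.norm_real, Real.norm_of_nonneg ht.1.le]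
    rw [MeasureTheory.setIntegral_congr_fun measurableSet_Ioc heq,
      ← intervalIntegral.integral_of_le hT0, intervalIntegral.integral_const_mul,
      integral_pow]
  have hIntSum : HasSum (fun n => a n * ((T:ℝ):ℂ)^(n+1) / ((n:ℂ)+1))
      (∫ t in (0:ℝ)..T, f ((t₀:ℂ) + t)) := by
    have hF_int : ∀ n : ℕ, MeasureTheory.Integrable (fun t : ℝ => a n * ((t:ℝ):ℂ)^n)
        (MeasureTheory.volume.restrict (Set.Ioc 0 T)) := fun n => hint_f n
    have hF_sum : Summable (fun n => ∫ t in Set.Ioc (0:ℝ) T, ‖a n * ((t:ℝ):ℂ)^n‖) := by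
      apply Summable.of_nonneg_of_le
        (fun n => MeasureTheory.integral_nonneg fun t => norm_nonneg _)
        (fun n => ?_) (Sx.mul_left T)
      rw [hnorm_val n]
      have h1 : (T^(n+1) - 0^(n+1)) / ((n:ℝ)+1) ≤ T * x^n := by
        rw [zero_pow (Nat.succ_ne_zero n), sub_zero]
        have h2 : T^(n+1) ≤ T * x^n := by
          rw [pow_succ']
          exact mul_le_mul_of_nonneg_left (pow_le_pow_left₀ hT0 hTx n) hT0
        have h3 : T^(n+1) / ((n:ℝ)+1) ≤ T^(n+1) := by
          apply div_le_self (by positivity)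
          have : (0:ℝ) ≤ (n:ℝ) := Nat.cast_nonneg n
          linarith
        linarith
      calc ‖a n‖ * ((T^(n+1) - 0^(n+1)) / ((n:ℝ)+1)) ≤ ‖a n‖ * (T * x^n) :=
            mul_le_mul_of_nonneg_left h1 (norm_nonneg _)
        _ = T * (‖a n‖ * x^n) := by ring
    have h0 := MeasureTheory.hasSum_integral_of_summable_integral_norm hF_int hF_sum
    have heqint : ∫ t in Set.Ioc (0:ℝ) T, (∑' n, a n * ((t:ℝ):ℂ)^n)
        = ∫ t in Set.Ioc (0:ℝ) T, f ((t₀:ℂ) + t) := by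
      apply MeasureTheory.setIntegral_congr_fun measurableSet_Ioc
      intro t ht
      simp only
      have hnt : ‖((t:ℝ):ℂ)‖ < R := by
        rw [Complex.norm_real, Real.norm_of_nonneg ht.1.le]
        exact lt_of_le_of_lt ht.2 hTR
      exact (hsum ((t:ℝ):ℂ) hnt).tsum_eq
    rw [heqint] at h0
    have hfn : ∀ n, (∫ t in Set.Ioc (0:ℝ) T, a n * ((t:ℝ):ℂ)^n)
        = a n * ((T:ℝ):ℂ)^(n+1) / ((n:ℂ)+1) := by
      intro n
      rw [← intervalIntegral.integral_of_le hT0]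
      exact hint_val n
    simp_rw [hfn] at h0
    rw [intervalIntegral.integral_of_le hT0]
    exact h0
  -- the difference
  have hD : HasSum (fun n : ℕ => (r:ℂ) * ∑ ν ∈ Icc 1 q, ((α:ℂ)^ν/(ν:ℂ)) *
      (if (s:ℤ) ∣ ((n:ℤ) - ((ν-1 : ℕ):ℤ)) then a n * (r:ℂ)^n else 0)
      - a n * ((T:ℝ):ℂ)^(n+1) / ((n:ℂ)+1))
      (Qquad q s α f t₀ r - ∫ t in (0:ℝ)..T, f ((t₀:ℂ) + t)) := hQ.sub hIntSum
  set d : ℕ → ℂ := fun n : ℕ => (r:ℂ) * ∑ ν ∈ Icc 1 q, ((α:ℂ)^ν/(ν:ℂ)) *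
      (if (s:ℤ) ∣ ((n:ℤ) - ((ν-1 : ℕ):ℤ)) then a n * (r:ℂ)^n else 0)
      - a n * ((T:ℝ):ℂ)^(n+1) / ((n:ℂ)+1) with hddef
  -- vanishing of low-order terms
  have hvanish : ∀ n, n < q → d n = 0 := by
    intro n hn
    have hmem : n + 1 ∈ Icc 1 q := by simp only [mem_Icc]; omega
    have hsel : ∑ ν ∈ Icc 1 q, ((α:ℂ)^ν/(ν:ℂ)) *
        (if (s:ℤ) ∣ ((n:ℤ) - ((ν-1:ℕ):ℤ)) then a n * (r:ℂ)^n else 0)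
        = ((α:ℂ)^(n+1)/((n:ℂ)+1)) * (a n * (r:ℂ)^n) := by
      rw [Finset.sum_eq_single_of_mem (n+1) hmem ?_]
      · rw [if_pos (by simp)]
        push_cast
        ring
      · intro ν hν hne
        simp only [mem_Icc] at hν
        have hcast : ((ν-1:ℕ):ℤ) = (ν:ℤ) - 1 := by omega
        rw [hcast]
        have hnd : ¬ (s:ℤ) ∣ ((n:ℤ) - ((ν:ℤ)-1)) := by
          intro hdvd
          have habs : |(n:ℤ) - ((ν:ℤ)-1)| < (s:ℤ) := by
            rw [abs_lt]
            constructor <;> [skip; skip] <;> omega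
          have h0 := Int.eq_zero_of_abs_lt_dvd hdvd habs
          omega
        rw [if_neg hnd, mul_zero]
    rw [hddef]
    simp only
    rw [hsel, hTdef]
    push_cast
    ring
  -- the bound on each term
  have hbound : ∀ n, ‖d n‖ ≤ r^(q+1) * K * (‖a n‖ * x^n) := by
    intro n
    rcases lt_or_ge n q with hn | hn
    · rw [hvanish n hn, norm_zero]
      positivity
    · obtain ⟨j, rfl⟩ : ∃ j, n = q + j := ⟨n - q, by omega⟩
      have hrC : ‖(r:ℂ)‖ = r := by rw [Complex.norm_real, Real.norm_of_nonneg hr0.le]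
      have htermb : ∀ ν ∈ Icc 1 q, ‖((α:ℂ)^ν/(ν:ℂ)) *
          (if (s:ℤ) ∣ (((q+j:ℕ):ℤ) - ((ν-1:ℕ):ℤ)) then a (q+j) * (r:ℂ)^(q+j) else 0)‖
          ≤ A^q * (‖a (q+j)‖ * r^(q+j)) := by
        intro ν hν
        simp only [mem_Icc] at hν
        rw [norm_mul]
        have h1 : ‖(α:ℂ)^ν/(ν:ℂ)‖ ≤ A^q := by
          rw [norm_div, norm_pow]
          have hαn : ‖(α:ℂ)‖ = α := by rw [Complex.norm_real, Real.norm_of_nonneg hα.le]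
          have hνn : ‖(ν:ℂ)‖ = (ν:ℝ) := by
            rw [show ((ν:ℕ):ℂ) = (((ν:ℕ):ℝ):ℂ) by push_cast; ring, Complex.norm_real,
              Real.norm_of_nonneg (Nat.cast_nonneg ν)]
          rw [hαn, hνn]
          have hν1 : (1:ℝ) ≤ (ν:ℝ) := by exact_mod_cast hν.1
          have h2 : α^ν/(ν:ℝ) ≤ α^ν := div_le_self (by positivity) hν1
          have h3 : α^ν ≤ A^ν := pow_le_pow_left₀ hα.le hAα ν
          have h4 : A^ν ≤ A^q := pow_le_pow_right₀ hA1 hν.2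
          linarith
        have h2 : ‖(if (s:ℤ) ∣ (((q+j:ℕ):ℤ) - ((ν-1:ℕ):ℤ)) then a (q+j) * (r:ℂ)^(q+j) else 0)‖
            ≤ ‖a (q+j)‖ * r^(q+j) := by
          split
          · rw [norm_mul, norm_pow, hrC]
          · rw [norm_zero]; positivity
        exact mul_le_mul h1 h2 (norm_nonneg _) (by positivity)
      have hsumb : ‖∑ ν ∈ Icc 1 q, ((α:ℂ)^ν/(ν:ℂ)) *
          (if (s:ℤ) ∣ (((q+j:ℕ):ℤ) - ((ν-1:ℕ):ℤ)) then a (q+j) * (r:ℂ)^(q+j) else 0)‖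
          ≤ q * (A^q * (‖a (q+j)‖ * r^(q+j))) := by
        refine le_trans (norm_sum_le _ _) (le_trans (Finset.sum_le_sum htermb) ?_)
        rw [Finset.sum_const, Nat.card_Icc]
        simp only [Nat.add_sub_cancel, nsmul_eq_mul]
        exact le_rfl
      have hsecond : ‖a (q+j) * ((T:ℝ):ℂ)^(q+j+1) / (((q+j:ℕ):ℂ)+1)‖
          ≤ ‖a (q+j)‖ * (A^(q+j+1) * r^(q+j+1)) := by
        rw [norm_div, norm_mul, norm_pow]
        have hTn : ‖((T:ℝ):ℂ)‖ = T := by rw [Complex.norm_real, Real.norm_of_nonneg hT0]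
        have hden : (1:ℝ) ≤ ‖(((q+j:ℕ):ℂ)+1)‖ := by
          rw [show (((q+j:ℕ):ℂ)+1) = ((((q+j:ℕ):ℝ)+1:ℝ):ℂ) by push_cast; ring,
            Complex.norm_real, Real.norm_of_nonneg (by positivity)]
          have : (0:ℝ) ≤ ((q+j:ℕ):ℝ) := Nat.cast_nonneg _
          linarith
        have hTb : T^(q+j+1) ≤ A^(q+j+1) * r^(q+j+1) := by
          rw [← mul_pow]
          apply pow_le_pow_left₀ hT0
          rw [hTdef]
          exact mul_le_mul_of_nonneg_right hAα hr0.le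
        rw [hTn]
        have hnum : ‖a (q+j)‖ * T^(q+j+1) ≤ ‖a (q+j)‖ * (A^(q+j+1) * r^(q+j+1)) :=
          mul_le_mul_of_nonneg_left hTb (norm_nonneg _)
        calc ‖a (q+j)‖ * T^(q+j+1) / ‖(((q+j:ℕ):ℂ)+1)‖
            ≤ ‖a (q+j)‖ * T^(q+j+1) := div_le_self (by positivity) hden
          _ ≤ ‖a (q+j)‖ * (A^(q+j+1) * r^(q+j+1)) := hnum
      have hcrude : ‖d (q+j)‖ ≤ ‖a (q+j)‖ * r^(q+j+1) * (q*A^q + A^(q+j+1)) := by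
        rw [hddef]
        simp only
        refine le_trans (norm_sub_le _ _) ?_
        rw [norm_mul, hrC]
        have hadd := add_le_add (mul_le_mul_of_nonneg_left hsumb hr0.le) hsecond
        refine le_trans hadd (le_of_eq (by ring))
      have h2 : r^(q+j+1) ≤ r^(q+1) * B^j := by
        have : r^(q+j+1) = r^(q+1) * r^j := by ring
        rw [this]
        exact mul_le_mul_of_nonneg_left (pow_le_pow_left₀ hr0.le hrB j) (by positivity)
      have hKx : K * x^(q+j) = (q*A^q + A) * A^(q+j) * B^j := by
        rw [hKdef, hxdef, mul_pow, pow_add B q j]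
        field_simp
      have h4 : q*A^q + A^(q+j+1) ≤ (q*A^q + A) * A^(q+j) := by
        have hge : (1:ℝ) ≤ A^(q+j) := by
          simpa using pow_le_pow_left₀ (by norm_num) hA1 (q+j)
        have hqq : (0:ℝ) ≤ (q:ℝ) * A^q := by positivity
        have hs1 : (q:ℝ)*A^q ≤ (q:ℝ)*A^q * A^(q+j) := le_mul_of_one_le_right hqq hge
        have hs2 : A^(q+j+1) = A * A^(q+j) := by ring
        have hexp : (q*A^q + A) * A^(q+j) = (q:ℝ)*A^q*A^(q+j) + A*A^(q+j) := by ring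
        rw [hexp, hs2]
        linarith
      have s1 : ‖a (q+j)‖ * r^(q+j+1) * (q*A^q + A^(q+j+1))
          ≤ ‖a (q+j)‖ * (r^(q+1) * B^j) * (q*A^q + A^(q+j+1)) := by
        apply mul_le_mul_of_nonneg_right (mul_le_mul_of_nonneg_left h2 (norm_nonneg _))
        positivity
      have s2 : ‖a (q+j)‖ * (r^(q+1) * B^j) * (q*A^q + A^(q+j+1))
          ≤ ‖a (q+j)‖ * (r^(q+1) * B^j) * ((q*A^q + A) * A^(q+j)) := by
        apply mul_le_mul_of_nonneg_left h4
        positivity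
      have s3 : ‖a (q+j)‖ * (r^(q+1) * B^j) * ((q*A^q + A) * A^(q+j))
          = r^(q+1) * K * (‖a (q+j)‖ * x^(q+j)) := by
        linear_combination (-(r^(q+1) * ‖a (q+j)‖)) * hKx
      linarith
  -- conclusion
  have hsummd : Summable (fun n => ‖d n‖) :=
    Summable.of_nonneg_of_le (fun n => norm_nonneg _) hbound (Sx.mul_left (r^(q+1)*K))
  have hnorm1 : ‖Qquad q s α f t₀ r - ∫ t in (0:ℝ)..T, f ((t₀:ℂ)+t)‖ ≤ ∑' n, ‖d n‖ := by
    rw [← hD.tsum_eq]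
    exact norm_tsum_le_tsum_norm hsummd
  have hnorm2 : ∑' n, ‖d n‖ ≤ r^(q+1) * K * C₀ := by
    have h1 : ∑' n, ‖d n‖ ≤ ∑' n, r^(q+1)*K*(‖a n‖*x^n) :=
      Summable.tsum_le_tsum hbound hsummd (Sx.mul_left _)
    rw [tsum_mul_left] at h1
    rw [hC0def]
    exact h1
  have hfinal : r^(q+1)*K*C₀ ≤ (K*C₀+1)*r^(q+1) := by
    have hp1 : (0:ℝ) < r^(q+1) := pow_pos hr0 _
    have he : r^(q+1)*K*C₀ = (K*C₀) * r^(q+1) := by ring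
    rw [he]
    exact mul_le_mul_of_nonneg_right (by linarith) hp1.le
  calc ‖Qquad q s α f t₀ r - ∫ t in (0:ℝ)..T, f ((t₀:ℂ)+t)‖
      = ‖Qquad q s α f t₀ r - ∫ t in (0:ℝ)..T, f ((t₀:ℂ)+t)‖ := rfl
    _ ≤ ∑' n, ‖d n‖ := hnorm1
    _ ≤ r^(q+1) * K * C₀ := hnorm2
    _ ≤ (K*C₀+1) * r^(q+1) := hfinal
end
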